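/- Let L ∈ K(x,y)[S_y, S_y^{-1}] be a nonzero operator and M ∈ A_{λ,μ}. Then there exist unique Q, R ∈ A_{λ,μ} such that M = L ⊙ Q + R, and R either is zero or satisfies lord(φ_{λ,μ}(L)) ≤ lord(R) ≤ hord(R) < hord(φ_{λ,μ}(L)). -/

import Mathlib

open Polynomial BigOperators

noncomputable section

/-- The shift automorphism `X ↦ X + 1` of a polynomial ring. -/
def shiftPoly (A : Type*) [CommRing A] : Polynomial A ≃ₐ[A] Polynomial A :=
  AlgEquiv.ofAlgHom (aeval (X + 1)) (aeval (X - 1))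
    (by apply algHom_ext; simp) (by apply algHom_ext; simp)

variable (K : Type*) [Field K] [CharZero K]

/-- `K[x,y]` modelled as `K[x][y]`: the inner variable is `x`, the outer one is `y`. -/
abbrev Rxy := Polynomial (Polynomial K)

/-- The rational function field `K(x,y)`, as the fraction field of `K[x][y]`. -/
abbrev Fxy := FractionRing (Rxy K)

/-- The shift `x ↦ x + 1` on `K[x]`. -/
def σxK : RingAut (Polynomial K) := (shiftPoly K).toRingEquiv

/-- The shift `x ↦ x + 1` on `K[x,y]`. -/
def σxR : RingAut (Rxy K) := mapEquiv (shiftPoly K).toRingEquiv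

/-- The shift `y ↦ y + 1` on `K[x,y]`. -/
def σyR : RingAut (Rxy K) := (shiftPoly (Polynomial K)).toRingEquiv

/-- The shift `σ_x` on `K(x,y)`. -/
def σxF : RingAut (Fxy K) := IsFractionRing.ringEquivOfRingEquiv (σxR K)

/-- The shift `σ_y` on `K(x,y)`. -/
def σyF : RingAut (Fxy K) := IsFractionRing.ringEquivOfRingEquiv (σyR K)

/-- The canonical map `K[x,y] → K(x,y)`. -/
def ι₀ : Rxy K →+* Fxy K := algebraMap (Rxy K) (Fxy K)

/-- The canonical map `K[x] → K(x,y)`. -/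
def ιx₀ : Polynomial K →+* Fxy K := (ι₀ K).comp (Polynomial.C : Polynomial K →+* Rxy K)

/-- The canonical map `K → K(x,y)`. -/
def ιK : K →+* Fxy K := (ιx₀ K).comp (Polynomial.C : K →+* Polynomial K)

/-- The element `x` of `K(x,y)`. -/
def xF : Fxy K := ιx₀ K X

/-- The element `y` of `K(x,y)`. -/
def yF : Fxy K := ι₀ K X

/-- A rational function `f ∈ K(x,y)` is `σ_y`-summable if `f = σ_y(g) - g`
for some `g ∈ K(x,y)`. -/
def IsSummableY (f : Fxy K) : Prop := ∃ g : Fxy K, f = σyF K g - g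

/-- The Laurent operator ring `A = K(x,y)[S_x,S_y,S_x⁻¹,S_y⁻¹]`, an operator being
recorded by its (finitely supported) family of coefficients `a_{ij}` in
`L = Σ a_{ij} S_x^i S_y^j`. -/
abbrev OpA := (ℤ × ℤ) →₀ Fxy K

/-- The subring `A_{λ,μ} = K(x,y)[S_{λ,μ}, S_{λ,μ}⁻¹]`, an operator being recorded by its
(finitely supported) family of coefficients `a_i` in `M = Σ a_i S_{λ,μ}^i`. -/
abbrev OpB := ℤ →₀ Fxy K

/-- The automorphism `σ_x^i σ_y^j` of `K(x,y)` attached to the monomial `S_x^i S_y^j`. -/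
def σv (v : ℤ × ℤ) : RingAut (Fxy K) := σxF K ^ v.1 * σyF K ^ v.2

/-- Multiplication in `A`, determined by the commutation rule `S_x^i S_y^j f
= σ_x^i σ_y^j (f) S_x^i S_y^j`. -/
def mulA (L M : OpA K) : OpA K :=
  L.sum fun p a => M.sum fun q b => Finsupp.single (p + q) (a * σv K p b)

/-- The application of an operator `L = Σ a_{ij} S_x^i S_y^j ∈ A` to a rational function. -/
def applyA (L : OpA K) (f : Fxy K) : Fxy K := L.sum fun p a => a * σv K p f

/-- The operator `S_y - 1 ∈ A`. -/
def SyOne : OpA K :=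
  Finsupp.single ((0 : ℤ), (1 : ℤ)) (1 : Fxy K) - Finsupp.single ((0 : ℤ), (0 : ℤ)) (1 : Fxy K)

section TypeLamMu

/- `α`, `β` are the Bézout cofactors for the integer-linear type `(λ, μ)`,
so that `S_{λ,μ} = S_x^α S_y^β`. -/
variable (α β : ℤ)

/-- The automorphism `σ_{λ,μ} = σ_x^α σ_y^β` of `K(x,y)` attached to `S_{λ,μ} = S_x^α S_y^β`. -/
def τF : RingAut (Fxy K) := σxF K ^ α * σyF K ^ β

/-- Multiplication in `A_{λ,μ}`. -/
def mulB (L M : OpB K) : OpB K :=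
  L.sum fun i a => M.sum fun j b => Finsupp.single (i + j) (a * (τF K α β ^ i) b)

/-- The application of an operator `M = Σ a_i S_{λ,μ}^i ∈ A_{λ,μ}` to a rational function. -/
def applyB (M : OpB K) (f : Fxy K) : Fxy K := M.sum fun i a => a * (τF K α β ^ i) f

/-- The inclusion `A_{λ,μ} ⊆ A`, sending `S_{λ,μ}^k` to `S_x^{kα} S_y^{kβ}`. -/
def ιB (M : OpB K) : OpA K := Finsupp.mapDomain (fun k : ℤ => (k * α, k * β)) M

/-- The left `K(x,y)`-linear map `φ_{λ,μ} : A → A_{λ,μ}`,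
sending `Σ a_{ij} S_x^i S_y^j` to `Σ a_{ij} S_{λ,μ}^{iλ+jμ}`. -/
def φB (lam μ : ℤ) (L : OpA K) : OpB K :=
  Finsupp.mapDomain (fun p : ℤ × ℤ => p.1 * lam + p.2 * μ) L

/-- The left scalar multiplication `L ⊙ M = φ_{λ,μ}(L M)` of `L ∈ A` on `M ∈ A_{λ,μ}`. -/
def odot (lam μ : ℤ) (L : OpA K) (M : OpB K) : OpB K :=
  φB K lam μ (mulA K L (ιB K α β M))

end TypeLamMu

/-- The lowest order `lord(M)` of a (nonzero) operator `M ∈ A_{λ,μ}`. -/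
def lord (M : OpB K) : ℤ := WithTop.untopD 0 (M.support.min)

/-- The highest order `hord(M)` of a (nonzero) operator `M ∈ A_{λ,μ}`. -/
def hord (M : OpB K) : ℤ := WithBot.unbotD 0 (M.support.max)

/-- The inclusion `K(x,y)[S_y, S_y⁻¹] ⊆ A`. -/
def ιy (L : ℤ →₀ Fxy K) : OpA K := Finsupp.mapDomain (fun j : ℤ => ((0 : ℤ), j)) L

/-- The inclusion `K[x][S_x] ⊆ A`, for operators with polynomial coefficients
supported on nonnegative powers of `S_x`. -/
def ιxOp (L : ℕ →₀ Polynomial K) : OpA K :=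
  L.sum fun ℓ c => Finsupp.single ((ℓ : ℤ), (0 : ℤ)) (ιx₀ K c)

/-- A nonzero operator `L = Σ c_ℓ S_x^ℓ ∈ K[x][S_x]` is a telescoper for `f ∈ K(x,y)`
if `L(f)` is `σ_y`-summable. -/
def IsTelescoper (L : ℕ →₀ Polynomial K) (f : Fxy K) : Prop :=
  L ≠ 0 ∧ IsSummableY K (applyA K (ιxOp K L) f)

/-- The degree in `x` of a polynomial in `K[x,y] = K[x][y]`. -/
def degX (r : Rxy K) : ℕ := r.support.sup fun n => (r.coeff n).natDegree

/-- The total degree in `x, y` of a polynomial in `K[x,y] = K[x][y]`. -/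
def degXY (r : Rxy K) : ℕ := r.support.sup fun n => n + (r.coeff n).natDegree

end


noncomputable section AbstractDiv

variable {F : Type*} [Field F]

/-- lowest order -/
def lo (M : ℤ →₀ F) : ℤ := WithTop.untopD 0 (M.support.min)
/-- highest order -/
def ho (M : ℤ →₀ F) : ℤ := WithBot.unbotD 0 (M.support.max)

lemma lo_mem {M : ℤ →₀ F} (h : M ≠ 0) : lo M ∈ M.support := by
  have hne : M.support.Nonempty := Finsupp.support_nonempty_iff.2 h
  have : lo M = M.support.min' hne := by
    have := Finset.coe_min' hne
    simp [lo, ← this]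
  rw [this]; exact Finset.min'_mem _ _

lemma lo_le {M : ℤ →₀ F} {n : ℤ} (h : n ∈ M.support) : lo M ≤ n := by
  have hne : M.support.Nonempty := ⟨n, h⟩
  have : lo M = M.support.min' hne := by
    have := Finset.coe_min' hne
    simp [lo, ← this]
  rw [this]; exact Finset.min'_le _ _ h

lemma ho_mem {M : ℤ →₀ F} (h : M ≠ 0) : ho M ∈ M.support := by
  have hne : M.support.Nonempty := Finsupp.support_nonempty_iff.2 h
  have : ho M = M.support.max' hne := by
    have := Finset.coe_max' hne
    simp [ho, ← this]
  rw [this]; exact Finset.max'_mem _ _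

lemma le_ho {M : ℤ →₀ F} {n : ℤ} (h : n ∈ M.support) : n ≤ ho M := by
  have hne : M.support.Nonempty := ⟨n, h⟩
  have : ho M = M.support.max' hne := by
    have := Finset.coe_max' hne
    simp [ho, ← this]
  rw [this]; exact Finset.le_max' _ _ h

lemma lo_le_ho {M : ℤ →₀ F} (h : M ≠ 0) : lo M ≤ ho M := le_ho (lo_mem h)

lemma lo_eq_of {M : ℤ →₀ F} {m : ℤ} (h1 : m ∈ M.support) (h2 : ∀ n ∈ M.support, m ≤ n) :
    lo M = m := by
  have hM : M ≠ 0 := by rintro rfl; simp at h1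
  exact le_antisymm (lo_le h1) (h2 _ (lo_mem hM))

lemma ho_eq_of {M : ℤ →₀ F} {m : ℤ} (h1 : m ∈ M.support) (h2 : ∀ n ∈ M.support, n ≤ m) :
    ho M = m := by
  have hM : M ≠ 0 := by rintro rfl; simp at h1
  exact le_antisymm (h2 _ (ho_mem hM)) (le_ho h1)

variable (σ : F ≃+* F) (μ : ℤ) (L : ℤ →₀ F)

/-- The skew "multiplication" operator. -/
def dOp (Q : ℤ →₀ F) : ℤ →₀ F :=
  L.sum fun j a => Q.sum fun k b => Finsupp.single (k + j * μ) (a * (σ ^ j) b)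

lemma dOp_apply (Q : ℤ →₀ F) (n : ℤ) :
    dOp σ μ L Q n = ∑ j ∈ L.support, L j * (σ ^ j) (Q (n - j * μ)) := by
  rw [dOp, Finsupp.sum_apply, Finsupp.sum]
  refine Finset.sum_congr rfl fun j hj => ?_
  rw [Finsupp.sum_apply]
  have : (Q.sum fun k b => (Finsupp.single (k + j * μ) (L j * (σ ^ j) b)) n)
      = Q.sum fun k b => if k = n - j * μ then L j * (σ ^ j) b else 0 := by
    refine Finsupp.sum_congr fun k _ => ?_
    rw [Finsupp.single_apply]
    congr 1
    exact propext (by omega)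
  rw [this, Finsupp.sum_ite_eq']
  split
  · rfl
  · rename_i h
    rw [Finsupp.notMem_support_iff.1 h]
    simp

lemma dOp_sub (Q Q' : ℤ →₀ F) :
    dOp σ μ L (Q - Q') = dOp σ μ L Q - dOp σ μ L Q' := by
  ext n
  simp [dOp_apply, Finsupp.sub_apply, map_sub, mul_sub, Finset.sum_sub_distrib]

lemma dOp_add (Q Q' : ℤ →₀ F) :
    dOp σ μ L (Q + Q') = dOp σ μ L Q + dOp σ μ L Q' := by
  ext n
  simp [dOp_apply, Finsupp.add_apply, map_add, mul_add, Finset.sum_add_distrib]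

lemma dOp_zero : dOp σ μ L (0 : ℤ →₀ F) = 0 := by
  ext n
  simp [dOp_apply]

lemma dOp_neg (Q : ℤ →₀ F) : dOp σ μ L (-Q) = -dOp σ μ L Q := by
  ext n
  simp [dOp_apply, Finset.sum_neg_distrib]

lemma dOp_supp {Q : ℤ →₀ F} {n : ℤ} (h : n ∈ (dOp σ μ L Q).support) :
    ∃ j ∈ L.support, n - j * μ ∈ Q.support := by
  by_contra hc
  push_neg at hc
  have : dOp σ μ L Q n = 0 := by
    rw [dOp_apply]
    refine Finset.sum_eq_zero fun j hj => ?_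
    rw [Finsupp.notMem_support_iff.1 (hc j hj)]
    simp
  exact Finsupp.mem_support_iff.1 h this

lemma dOp_supp_bounds (hμ : 0 < μ) {Q : ℤ →₀ F} {n : ℤ} (h : n ∈ (dOp σ μ L Q).support) :
    lo Q + lo L * μ ≤ n ∧ n ≤ ho Q + ho L * μ := by
  obtain ⟨j, hj, hk⟩ := dOp_supp σ μ L h
  have h1 : lo L ≤ j := lo_le hj
  have h2 : j ≤ ho L := le_ho hj
  have h3 : lo Q ≤ n - j * μ := lo_le hk
  have h4 : n - j * μ ≤ ho Q := le_ho hk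
  constructor <;> nlinarith

lemma dOp_top (hμ : 0 < μ) (Q : ℤ →₀ F) :
    dOp σ μ L Q (ho Q + ho L * μ) = L (ho L) * (σ ^ ho L) (Q (ho Q)) := by
  by_cases hL : L = 0
  · simp [hL, dOp_apply]
  by_cases hQ : Q = 0
  · simp [hQ, dOp_apply]
  rw [dOp_apply]
  rw [Finset.sum_eq_single (ho L)]
  · have h0 : ho Q + ho L * μ - ho L * μ = ho Q := by ring
    rw [h0]
  · intro j hj hne
    have h2 : j ≤ ho L := le_ho hj
    have : ho Q < ho Q + ho L * μ - j * μ := by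
      have : j < ho L := lt_of_le_of_ne h2 hne
      nlinarith
    have : Q (ho Q + ho L * μ - j * μ) = 0 := by
      by_contra hc
      exact absurd (le_ho (Finsupp.mem_support_iff.2 hc)) (by omega)
    simp [this]
  · intro h
    exact absurd (ho_mem hL) h

lemma dOp_bot (hμ : 0 < μ) (Q : ℤ →₀ F) :
    dOp σ μ L Q (lo Q + lo L * μ) = L (lo L) * (σ ^ lo L) (Q (lo Q)) := by
  by_cases hL : L = 0
  · simp [hL, dOp_apply]
  by_cases hQ : Q = 0
  · simp [hQ, dOp_apply]
  rw [dOp_apply]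
  rw [Finset.sum_eq_single (lo L)]
  · have h0 : lo Q + lo L * μ - lo L * μ = lo Q := by ring
    rw [h0]
  · intro j hj hne
    have h2 : lo L ≤ j := lo_le hj
    have : lo Q + lo L * μ - j * μ < lo Q := by
      have : lo L < j := lt_of_le_of_ne h2 (Ne.symm hne)
      nlinarith
    have : Q (lo Q + lo L * μ - j * μ) = 0 := by
      by_contra hc
      exact absurd (lo_le (Finsupp.mem_support_iff.2 hc)) (by omega)
    simp [this]
  · intro h
    exact absurd (lo_mem hL) h

lemma dOp_ne_zero (hμ : 0 < μ) (hL : L ≠ 0) {Q : ℤ →₀ F} (hQ : Q ≠ 0) :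
    dOp σ μ L Q ≠ 0 := by
  intro h
  have htop := dOp_top σ μ L hμ Q
  rw [h] at htop
  have hL' : L (ho L) ≠ 0 := Finsupp.mem_support_iff.1 (ho_mem hL)
  have hQ' : Q (ho Q) ≠ 0 := Finsupp.mem_support_iff.1 (ho_mem hQ)
  have hz : L (ho L) * (σ ^ ho L) (Q (ho Q)) = 0 := by simpa using htop.symm
  rcases mul_eq_zero.1 hz with h' | h'
  · exact hL' h'
  · exact hQ' (by
      have := congrArg (⇑(σ ^ ho L).symm) h'
      simpa using this)

section Main

/-- The set of operators admitting a (dOp, remainder-in-window) decomposition. -/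
def divSet : AddSubgroup (ℤ →₀ F) where
  carrier := {M | ∃ Q R : ℤ →₀ F, M = dOp σ μ L Q + R ∧
    ∀ n ∈ R.support, lo L * μ ≤ n ∧ n < ho L * μ}
  add_mem' := by
    rintro a b ⟨Q, R, rfl, hR⟩ ⟨Q', R', rfl, hR'⟩
    refine ⟨Q + Q', R + R', ?_, fun n hn => ?_⟩
    · rw [dOp_add]
      abel
    · rcases Finset.mem_union.1 (Finsupp.support_add hn) with h | h
      exacts [hR n h, hR' n h]
  zero_mem' := ⟨0, 0, by simp [dOp_zero], by simp⟩
  neg_mem' := by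
    rintro a ⟨Q, R, rfl, hR⟩
    refine ⟨-Q, -R, ?_, fun n hn => ?_⟩
    · rw [dOp_neg]
      abel
    · exact hR n (by simpa using hn)

lemma single_mem_divSet_of_window {n : ℤ} (b : F) (h1 : lo L * μ ≤ n) (h2 : n < ho L * μ) :
    Finsupp.single n b ∈ divSet σ μ L := by
  by_cases hb : b = 0
  · simp only [hb, Finsupp.single_zero]; exact AddSubgroup.zero_mem _
  refine ⟨0, Finsupp.single n b, by simp [dOp_zero], fun m hm => ?_⟩
  rw [Finsupp.support_single_ne_zero _ hb, Finset.mem_singleton] at hm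
  subst hm; exact ⟨h1, h2⟩

lemma sub_dOp_single_top (hμ : 0 < μ) (hL : L ≠ 0) {n : ℤ} (b : F) (hb : b ≠ 0) :
    ∃ E : ℤ →₀ F, Finsupp.single n b = dOp σ μ L
      (Finsupp.single (n - ho L * μ) ((σ ^ ho L).symm ((L (ho L))⁻¹ * b))) + E ∧
      ∀ m ∈ E.support, n - ho L * μ + lo L * μ ≤ m ∧ m < n := by
  set c : F := (σ ^ ho L).symm ((L (ho L))⁻¹ * b) with hc
  set Q : ℤ →₀ F := Finsupp.single (n - ho L * μ) c with hQdef
  have hLh : L (ho L) ≠ 0 := Finsupp.mem_support_iff.1 (ho_mem hL)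
  have hcne : c ≠ 0 := by
    simp only [hc, ne_eq, EmbeddingLike.map_eq_zero_iff, mul_eq_zero, inv_eq_zero, not_or]
    exact ⟨hLh, hb⟩
  have hQsupp : Q.support = {n - ho L * μ} := Finsupp.support_single_ne_zero _ hcne
  have hloQ : lo Q = n - ho L * μ := lo_eq_of (by simp [hQsupp]) (by simp [hQsupp])
  have hhoQ : ho Q = n - ho L * μ := ho_eq_of (by simp [hQsupp]) (by simp [hQsupp])
  have htop : dOp σ μ L Q n = b := by
    have h := dOp_top σ μ L hμ Q
    rw [hhoQ] at h
    have hn : n - ho L * μ + ho L * μ = n := by omega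
    rw [hn] at h
    rw [h, hQdef, Finsupp.single_eq_same, hc, RingEquiv.apply_symm_apply]
    field_simp
  refine ⟨Finsupp.single n b - dOp σ μ L Q, by abel, fun m hm => ?_⟩
  have hmem := Finsupp.mem_support_iff.1 hm
  rw [Finsupp.sub_apply] at hmem
  by_cases hdm : m ∈ (dOp σ μ L Q).support
  · have hb2 := dOp_supp_bounds σ μ L hμ hdm
    rw [hloQ, hhoQ] at hb2
    have hmn : m ≠ n := by
      intro h; subst h
      rw [htop, Finsupp.single_eq_same] at hmem
      simp at hmem
    refine ⟨by omega, lt_of_le_of_ne (by omega) hmn⟩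
  · rw [Finsupp.notMem_support_iff.1 hdm, sub_zero] at hmem
    have hmn : m = n := by
      by_contra h
      rw [Finsupp.single_apply, if_neg (Ne.symm h)] at hmem
      exact hmem rfl
    subst hmn
    exfalso
    apply hmem
    rw [Finsupp.single_eq_same]
    rw [Finsupp.notMem_support_iff.1 hdm] at htop
    exact htop.symm

lemma sub_dOp_single_bot (hμ : 0 < μ) (hL : L ≠ 0) {n : ℤ} (b : F) (hb : b ≠ 0) :
    ∃ E : ℤ →₀ F, Finsupp.single n b = dOp σ μ L
      (Finsupp.single (n - lo L * μ) ((σ ^ lo L).symm ((L (lo L))⁻¹ * b))) + E ∧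
      ∀ m ∈ E.support, n < m ∧ m ≤ n - lo L * μ + ho L * μ := by
  set c : F := (σ ^ lo L).symm ((L (lo L))⁻¹ * b) with hc
  set Q : ℤ →₀ F := Finsupp.single (n - lo L * μ) c with hQdef
  have hLl : L (lo L) ≠ 0 := Finsupp.mem_support_iff.1 (lo_mem hL)
  have hcne : c ≠ 0 := by
    simp only [hc, ne_eq, EmbeddingLike.map_eq_zero_iff, mul_eq_zero, inv_eq_zero, not_or]
    exact ⟨hLl, hb⟩
  have hQsupp : Q.support = {n - lo L * μ} := Finsupp.support_single_ne_zero _ hcne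
  have hloQ : lo Q = n - lo L * μ := lo_eq_of (by simp [hQsupp]) (by simp [hQsupp])
  have hhoQ : ho Q = n - lo L * μ := ho_eq_of (by simp [hQsupp]) (by simp [hQsupp])
  have hbot : dOp σ μ L Q n = b := by
    have h := dOp_bot σ μ L hμ Q
    rw [hloQ] at h
    have hn : n - lo L * μ + lo L * μ = n := by omega
    rw [hn] at h
    rw [h, hQdef, Finsupp.single_eq_same, hc, RingEquiv.apply_symm_apply]
    field_simp
  refine ⟨Finsupp.single n b - dOp σ μ L Q, by abel, fun m hm => ?_⟩
  have hmem := Finsupp.mem_support_iff.1 hm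
  rw [Finsupp.sub_apply] at hmem
  by_cases hdm : m ∈ (dOp σ μ L Q).support
  · have hb2 := dOp_supp_bounds σ μ L hμ hdm
    rw [hloQ, hhoQ] at hb2
    have hmn : m ≠ n := by
      intro h; subst h
      rw [hbot, Finsupp.single_eq_same] at hmem
      simp at hmem
    refine ⟨lt_of_le_of_ne (by omega) (Ne.symm hmn), by omega⟩
  · rw [Finsupp.notMem_support_iff.1 hdm, sub_zero] at hmem
    have hmn : m = n := by
      by_contra h
      rw [Finsupp.single_apply, if_neg (Ne.symm h)] at hmem
      exact hmem rfl
    subst hmn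
    exfalso
    apply hmem
    rw [Finsupp.single_eq_same]
    rw [Finsupp.notMem_support_iff.1 hdm] at hbot
    exact hbot.symm

lemma mem_divSet_of_supp (M : ℤ →₀ F)
    (h : ∀ n ∈ M.support, ∀ b : F, Finsupp.single n b ∈ divSet σ μ L) :
    M ∈ divSet σ μ L := by
  rw [← Finsupp.sum_single M, Finsupp.sum]
  exact AddSubgroup.sum_mem _ fun n hn => h n hn (M n)

lemma single_mem_divSet_upper (hμ : 0 < μ) (hL : L ≠ 0) : ∀ d : ℕ, ∀ n : ℤ, ∀ b : F,
    lo L * μ ≤ n → n < lo L * μ + d → Finsupp.single n b ∈ divSet σ μ L := by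
  intro d
  induction d with
  | zero => intro n b h1 h2; omega
  | succ d ih =>
    intro n b h1 h2
    by_cases hb : b = 0
    · simp only [hb, Finsupp.single_zero]; exact AddSubgroup.zero_mem _
    by_cases hw : n < ho L * μ
    · exact single_mem_divSet_of_window σ μ L b h1 hw
    push_neg at hw
    obtain ⟨E, hE, hEsupp⟩ := sub_dOp_single_top σ μ L hμ hL b hb
    rw [hE]
    refine AddSubgroup.add_mem _ ⟨_, 0, (add_zero _).symm, by simp⟩ ?_
    refine mem_divSet_of_supp σ μ L E fun m hm b' => ?_
    obtain ⟨hm1, hm2⟩ := hEsupp m hm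
    have hlh : lo L ≤ ho L := lo_le_ho hL
    have hw2 : lo L * μ ≤ ho L * μ := by nlinarith
    exact ih m b' (by omega) (by omega)

lemma single_mem_divSet_lower (hμ : 0 < μ) (hL : L ≠ 0) : ∀ d : ℕ, ∀ n : ℤ, ∀ b : F,
    ho L * μ - d ≤ n → n < ho L * μ → Finsupp.single n b ∈ divSet σ μ L := by
  intro d
  induction d with
  | zero => intro n b h1 h2; omega
  | succ d ih =>
    intro n b h1 h2
    by_cases hb : b = 0
    · simp only [hb, Finsupp.single_zero]; exact AddSubgroup.zero_mem _
    by_cases hw : lo L * μ ≤ n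
    · exact single_mem_divSet_of_window σ μ L b hw h2
    push_neg at hw
    obtain ⟨E, hE, hEsupp⟩ := sub_dOp_single_bot σ μ L hμ hL b hb
    rw [hE]
    refine AddSubgroup.add_mem _ ⟨_, 0, (add_zero _).symm, by simp⟩ ?_
    refine mem_divSet_of_supp σ μ L E fun m hm b' => ?_
    obtain ⟨hm1, hm2⟩ := hEsupp m hm
    exact ih m b' (by omega) (by omega)

lemma single_mem_divSet (hμ : 0 < μ) (hL : L ≠ 0) (n : ℤ) (b : F) :
    Finsupp.single n b ∈ divSet σ μ L := by
  by_cases h : lo L * μ ≤ n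
  · exact single_mem_divSet_upper σ μ L hμ hL (n - lo L * μ + 1).toNat n b h (by omega)
  · push_neg at h
    have hlh : lo L ≤ ho L := lo_le_ho hL
    have hw : lo L * μ ≤ ho L * μ := by nlinarith
    exact single_mem_divSet_lower σ μ L hμ hL (ho L * μ - n).toNat n b (by omega) (by omega)

theorem dOp_div (hμ : 0 < μ) (hL : L ≠ 0) (M : ℤ →₀ F) :
    ∃! QR : (ℤ →₀ F) × (ℤ →₀ F),
      M = dOp σ μ L QR.1 + QR.2 ∧
        (QR.2 = 0 ∨ (lo L * μ ≤ lo QR.2 ∧ lo QR.2 ≤ ho QR.2 ∧ ho QR.2 < ho L * μ)) := by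
  have hmem : M ∈ divSet σ μ L :=
    mem_divSet_of_supp σ μ L M fun n _ b => single_mem_divSet σ μ L hμ hL n b
  obtain ⟨Q, R, hQR, hR⟩ := hmem
  have window_iff : ∀ R0 : ℤ →₀ F,
      (∀ n ∈ R0.support, lo L * μ ≤ n ∧ n < ho L * μ) ↔
      (R0 = 0 ∨ (lo L * μ ≤ lo R0 ∧ lo R0 ≤ ho R0 ∧ ho R0 < ho L * μ)) := by
    intro R0
    constructor
    · intro h
      by_cases hR0 : R0 = 0
      · exact Or.inl hR0
      · exact Or.inr ⟨(h _ (lo_mem hR0)).1, lo_le_ho hR0, (h _ (ho_mem hR0)).2⟩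
    · intro h n hn
      rcases h with h | ⟨h1, _, h3⟩
      · rw [h] at hn; simp at hn
      · exact ⟨le_trans h1 (lo_le hn), lt_of_le_of_lt (le_ho hn) h3⟩
  refine ⟨(Q, R), ⟨hQR, (window_iff R).1 hR⟩, ?_⟩
  rintro ⟨Q2, R2⟩ ⟨hQR2, hcond2⟩
  have hR2 : ∀ n ∈ R2.support, lo L * μ ≤ n ∧ n < ho L * μ := (window_iff R2).2 hcond2
  have key : dOp σ μ L (Q2 - Q) = R - R2 := by
    rw [dOp_sub]
    have h := hQR.symm.trans hQR2
    rw [sub_eq_sub_iff_add_eq_add, ← h]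
    exact add_comm _ _
  have hQQ : Q2 = Q := by
    by_contra hne
    have hP : Q2 - Q ≠ 0 := sub_ne_zero.2 hne
    set P := Q2 - Q with hPdef
    have htopne : dOp σ μ L P (ho P + ho L * μ) ≠ 0 := by
      rw [dOp_top σ μ L hμ P]
      have hL2 : L (ho L) ≠ 0 := Finsupp.mem_support_iff.1 (ho_mem hL)
      have hP2 : P (ho P) ≠ 0 := Finsupp.mem_support_iff.1 (ho_mem hP)
      intro h
      rcases mul_eq_zero.1 h with h2 | h2
      · exact hL2 h2
      · exact hP2 (by
          have := congrArg (⇑(σ ^ ho L).symm) h2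
          simpa using this)
    have hbotne : dOp σ μ L P (lo P + lo L * μ) ≠ 0 := by
      rw [dOp_bot σ μ L hμ P]
      have hL2 : L (lo L) ≠ 0 := Finsupp.mem_support_iff.1 (lo_mem hL)
      have hP2 : P (lo P) ≠ 0 := Finsupp.mem_support_iff.1 (lo_mem hP)
      intro h
      rcases mul_eq_zero.1 h with h2 | h2
      · exact hL2 h2
      · exact hP2 (by
          have := congrArg (⇑(σ ^ lo L).symm) h2
          simpa using this)
    have hwin : ∀ m : ℤ, (R - R2) m ≠ 0 → lo L * μ ≤ m ∧ m < ho L * μ := by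
      intro m hm
      rw [Finsupp.sub_apply] at hm
      by_cases h1 : R m = 0
      · rw [h1, zero_sub, neg_ne_zero] at hm
        exact hR2 m (Finsupp.mem_support_iff.2 hm)
      · exact hR m (Finsupp.mem_support_iff.2 h1)
    have h1 := hwin (ho P + ho L * μ) (by rw [← key]; exact htopne)
    have h2 := hwin (lo P + lo L * μ) (by rw [← key]; exact hbotne)
    have h3 : lo P ≤ ho P := lo_le_ho hP
    omega
  subst hQQ
  have hRR : R2 = R := by
    have h := hQR.symm.trans hQR2
    exact (add_left_cancel h).symm
  simp [hRR]

end Main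

end AbstractDiv

noncomputable section Bridge

variable {K : Type*} [Field K] [CharZero K]

lemma sigmav_zero (j : ℤ) : σv K ((0:ℤ), j) = σyF K ^ j := by
  simp [σv]

lemma mulA_iy_iB (α β : ℤ) (L : ℤ →₀ Fxy K) (Q : OpB K) :
    mulA K (ιy K L) (ιB K α β Q) =
      L.sum fun j a => Q.sum fun k b =>
        Finsupp.single (((k * α : ℤ), (j + k * β : ℤ)) : ℤ × ℤ) (a * (σyF K ^ j) b) := by
  rw [mulA, ιy, Finsupp.sum_mapDomain_index
    (by intro p; simp)
    (by intro p m1 m2; simp [add_mul, Finsupp.single_add, Finsupp.sum_add])]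
  refine Finsupp.sum_congr fun j hj => ?_
  rw [ιB, Finsupp.sum_mapDomain_index
    (by intro q; simp)
    (by intro q m1 m2; simp [mul_add, map_add, Finsupp.single_add, Finsupp.sum_add])]
  refine Finsupp.sum_congr fun k hk => ?_
  rw [sigmav_zero]
  congr 1
  simp [Prod.ext_iff]

lemma odot_eq (lam μ α β : ℤ) (hbez : α * lam + β * μ = 1)
    (L : ℤ →₀ Fxy K) (Q : OpB K) :
    odot K α β lam μ (ιy K L) Q = dOp (σyF K : Fxy K ≃+* Fxy K) μ L Q := by
  rw [odot, mulA_iy_iB, φB]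
  rw [show (Finsupp.mapDomain (fun p : ℤ × ℤ => p.1 * lam + p.2 * μ) : OpA K → OpB K)
      = ⇑(Finsupp.mapDomain.addMonoidHom (fun p : ℤ × ℤ => p.1 * lam + p.2 * μ)) from rfl,
    map_finsuppSum]
  rw [dOp]
  refine Finsupp.sum_congr fun j hj => ?_
  rw [map_finsuppSum]
  refine Finsupp.sum_congr fun k hk => ?_
  show Finsupp.mapDomain _ (Finsupp.single _ _) = _
  rw [Finsupp.mapDomain_single]
  congr 1
  linear_combination k * hbez

lemma phiB_iy (lam μ : ℤ) (L : ℤ →₀ Fxy K) :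
    φB K lam μ (ιy K L) = Finsupp.mapDomain (fun j : ℤ => j * μ) L := by
  rw [φB, ιy, ← Finsupp.mapDomain_comp]
  congr 1
  funext j
  simp

lemma lord_eq_lo (M : OpB K) : lord K M = lo M := rfl
lemma hord_eq_ho (M : OpB K) : hord K M = ho M := rfl

lemma lord_phiB (lam μ : ℤ) (hμ : 0 < μ) (L : ℤ →₀ Fxy K) (hL : L ≠ 0) :
    lord K (φB K lam μ (ιy K L)) = lo L * μ := by
  rw [phiB_iy, lord_eq_lo]
  have hg : Function.Injective (fun j : ℤ => j * μ) := by
    intro a b h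
    exact mul_right_cancel₀ hμ.ne' h
  apply lo_eq_of
  · rw [Finsupp.mem_support_iff]
    have h := Finsupp.mapDomain_apply hg L (lo L)
    simpa [h] using Finsupp.mem_support_iff.1 (lo_mem hL)
  · intro n hn
    obtain ⟨j, hj, rfl⟩ := Finset.mem_image.1 (Finsupp.mapDomain_support hn)
    exact mul_le_mul_of_nonneg_right (lo_le hj) hμ.le

lemma hord_phiB (lam μ : ℤ) (hμ : 0 < μ) (L : ℤ →₀ Fxy K) (hL : L ≠ 0) :
    hord K (φB K lam μ (ιy K L)) = ho L * μ := by
  rw [phiB_iy, hord_eq_ho]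
  have hg : Function.Injective (fun j : ℤ => j * μ) := by
    intro a b h
    exact mul_right_cancel₀ hμ.ne' h
  apply ho_eq_of
  · rw [Finsupp.mem_support_iff]
    have h := Finsupp.mapDomain_apply hg L (ho L)
    simpa [h] using Finsupp.mem_support_iff.1 (ho_mem hL)
  · intro n hn
    obtain ⟨j, hj, rfl⟩ := Finset.mem_image.1 (Finsupp.mapDomain_support hn)
    exact mul_le_mul_of_nonneg_right (le_ho hj) hμ.le

end Bridge

/-- Theorem `THM:leftquorem`.
Let `L ∈ K(x,y)[S_y, S_y⁻¹]` be a nonzero operator and `M ∈ A_{λ,μ}`.  Then there exist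
unique `Q, R ∈ A_{λ,μ}` such that `M = L ⊙ Q + R`, and `R` either is zero or satisfies
`lord(φ_{λ,μ}(L)) ≤ lord(R) ≤ hord(R) < hord(φ_{λ,μ}(L))`. -/
theorem statement5 (K : Type*) [Field K] [CharZero K]
    (lam μ α β : ℤ) (hμ : 0 < μ) (hcop : IsCoprime lam μ)
    (hbez : α * lam + β * μ = 1) (hα : 0 ≤ α ∧ α < μ)
    (hβ : lam ≠ 0 → |β| ≤ |lam|) (hβ0 : lam = 0 → α = 0 ∧ β = 1)
    (L : ℤ →₀ Fxy K) (hL : L ≠ 0) (M : OpB K) :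
    ∃! QR : OpB K × OpB K,
      M = odot K α β lam μ (ιy K L) QR.1 + QR.2 ∧
        (QR.2 = 0 ∨
          (lord K (φB K lam μ (ιy K L)) ≤ lord K QR.2 ∧
            lord K QR.2 ≤ hord K QR.2 ∧
            hord K QR.2 < hord K (φB K lam μ (ιy K L)))) := by
  simp only [odot_eq lam μ α β hbez L, lord_phiB lam μ hμ L hL, hord_phiB lam μ hμ L hL,
    lord_eq_lo, hord_eq_ho]
  exact dOp_div (σyF K) μ L hμ hL M
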